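/- (Deterministic corollary for μ(A).) Let G = (ZMod 2)^n with n ≥ 1 and let A ⊆ G. Suppose that for every nonempty S ⊆ {1,…,n} the Fourier coefficient of the indicator of A satisfies |1̂_A(S)| ≤ (4/|G|)·√(ln(|G|)·|A|). Then for all subsets B, C ⊆ G with |B| = |C| = |A|, μ(A,B,C) ≤ |A|³/|G| + 4·|A|^{3/2}·√(ln |G|). -/

import Mathlib

open Finset

/-- The character `χ_S` of `(ZMod 2)^n` associated to `S ⊆ {1,…,n}`. -/
noncomputable def chi (n : ℕ) (S : Finset (Fin n)) (x : Fin n → ZMod 2) : ℝ :=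
  (-1 : ℝ) ^ (∑ i ∈ S, (x i).val)

/-- The Fourier coefficient `f̂(S) = (1/|G|) Σ_x f(x) χ_S(x)`. -/
noncomputable def fhat (n : ℕ) (f : (Fin n → ZMod 2) → ℝ) (S : Finset (Fin n)) : ℝ :=
  (∑ x : Fin n → ZMod 2, f x * chi n S x) / (2 ^ n : ℝ)

/-- The indicator function of a subset. -/
def ind {n : ℕ} (A : Finset (Fin n → ZMod 2)) : (Fin n → ZMod 2) → ℝ :=
  fun x => if x ∈ A then 1 else 0

/-- `μ(A,B,C) = |{(a,b,c) ∈ A × B × C : a = b + c}|`. -/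
def mu {n : ℕ} (A B C : Finset (Fin n → ZMod 2)) : ℕ :=
  ((A ×ˢ B ×ˢ C).filter (fun p => p.1 = p.2.1 + p.2.2)).card

/-- The convolution `(f*g)(x) = Σ_y f(y) g(x+y)`. -/
noncomputable def conv (n : ℕ) (f g : (Fin n → ZMod 2) → ℝ) : (Fin n → ZMod 2) → ℝ :=
  fun x => ∑ y : Fin n → ZMod 2, f y * g (x + y)

section Aux

variable {n : ℕ}

private lemma neg_one_pow_val_add (u v : ZMod 2) :
    (-1 : ℝ) ^ ((u + v).val) = (-1 : ℝ) ^ u.val * (-1 : ℝ) ^ v.val := by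
  have h : (u + v).val % 2 = (u.val + v.val) % 2 := by revert u v; decide
  rw [neg_one_pow_eq_pow_mod_two, h, ← neg_one_pow_eq_pow_mod_two, pow_add]

private lemma chi_eq_prod (S : Finset (Fin n)) (x : Fin n → ZMod 2) :
    chi n S x = ∏ i ∈ S, (-1:ℝ) ^ (x i).val := by
  rw [chi, Finset.prod_pow_eq_pow_sum]

private lemma chi_add (S : Finset (Fin n)) (x y : Fin n → ZMod 2) :
    chi n S (x + y) = chi n S x * chi n S y := by
  simp only [chi_eq_prod, ← Finset.prod_mul_distrib, Pi.add_apply]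
  exact Finset.prod_congr rfl fun i _ => neg_one_pow_val_add _ _

private lemma sum_chi (x : Fin n → ZMod 2) :
    ∑ S : Finset (Fin n), chi n S x = if x = 0 then (2:ℝ)^n else 0 := by
  have h : ∑ S : Finset (Fin n), chi n S x
      = ∏ i : Fin n, ((-1:ℝ) ^ (x i).val + 1) := by
    rw [Finset.prod_add, ← Finset.powerset_univ]
    refine Finset.sum_congr rfl fun S _ => ?_
    simp [chi_eq_prod]
  rw [h]
  by_cases hx : x = 0
  · subst hx; simp; norm_num
  · rw [if_neg hx]
    obtain ⟨i, hi⟩ : ∃ i, x i ≠ 0 := by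
      by_contra h'; push_neg at h'; exact hx (funext h')
    refine Finset.prod_eq_zero (Finset.mem_univ i) ?_
    have key : ∀ u : ZMod 2, u ≠ 0 → u = 1 := by decide
    have h1 : x i = 1 := key (x i) hi
    rw [h1]
    have : (1 : ZMod 2).val = 1 := rfl
    rw [this]; norm_num

private lemma sum_chi_mul3 (x y z : Fin n → ZMod 2) :
    ∑ S : Finset (Fin n), chi n S x * chi n S y * chi n S z
      = if x + y + z = 0 then (2:ℝ)^n else 0 := by
  simp only [← chi_add]
  exact sum_chi _

private lemma sum_chi_mul2 (x y : Fin n → ZMod 2) :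
    ∑ S : Finset (Fin n), chi n S x * chi n S y = if x + y = 0 then (2:ℝ)^n else 0 := by
  simp only [← chi_add]
  exact sum_chi _

private lemma negself (v : Fin n → ZMod 2) : -v = v := by
  funext i
  have : ∀ u : ZMod 2, -u = u := by decide
  exact this (v i)

private lemma eq_add_iff' (x y z : Fin n → ZMod 2) : x = y + z ↔ x + y + z = 0 := by
  rw [add_assoc, add_eq_zero_iff_eq_neg, negself]

private lemma add_eq_zero_iff'' (x y : Fin n → ZMod 2) : x + y = 0 ↔ y = x := by
  rw [add_eq_zero_iff_eq_neg, negself, eq_comm]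

private lemma sum_ind (A : Finset (Fin n → ZMod 2)) (f : (Fin n → ZMod 2) → ℝ) :
    ∑ x : Fin n → ZMod 2, ind A x * f x = ∑ x ∈ A, f x := by
  simp only [ind, boole_mul]
  rw [Finset.sum_ite_mem, Finset.univ_inter]

private lemma triple_ind (A B C : Finset (Fin n → ZMod 2))
    (F : (Fin n → ZMod 2) → (Fin n → ZMod 2) → (Fin n → ZMod 2) → ℝ) :
    ∑ x : Fin n → ZMod 2, ∑ y : Fin n → ZMod 2, ∑ z : Fin n → ZMod 2,
      ind A x * ind B y * ind C z * F x y z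
      = ∑ x ∈ A, ∑ y ∈ B, ∑ z ∈ C, F x y z := by
  symm
  rw [← sum_ind A (fun x => ∑ y ∈ B, ∑ z ∈ C, F x y z)]
  refine Finset.sum_congr rfl fun x _ => ?_
  rw [← sum_ind B (fun y => ∑ z ∈ C, F x y z), Finset.mul_sum]
  refine Finset.sum_congr rfl fun y _ => ?_
  rw [← sum_ind C (fun z => F x y z), Finset.mul_sum, Finset.mul_sum]
  refine Finset.sum_congr rfl fun z _ => ?_
  ring

private lemma mu_eq (A B C : Finset (Fin n → ZMod 2)) :
    (mu A B C : ℝ) = ∑ x : Fin n → ZMod 2, ∑ y : Fin n → ZMod 2, ∑ z : Fin n → ZMod 2,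
      ind A x * ind B y * ind C z * (if x + y + z = 0 then (1:ℝ) else 0) := by
  rw [triple_ind, mu, Finset.card_filter]
  push_cast
  rw [Finset.sum_product]
  refine Finset.sum_congr rfl fun x _ => ?_
  rw [Finset.sum_product]
  refine Finset.sum_congr rfl fun y _ => Finset.sum_congr rfl fun z _ => ?_
  simp only [eq_add_iff']

private lemma sum3_mul (s t u : Finset (Fin n → ZMod 2)) (f g h : (Fin n → ZMod 2) → ℝ) :
    (∑ x ∈ s, f x) * (∑ y ∈ t, g y) * (∑ z ∈ u, h z)
      = ∑ x ∈ s, ∑ y ∈ t, ∑ z ∈ u, f x * g y * h z := by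
  rw [Finset.sum_mul_sum, Finset.sum_mul]
  refine Finset.sum_congr rfl fun x _ => ?_
  rw [Finset.sum_mul]
  refine Finset.sum_congr rfl fun y _ => ?_
  rw [Finset.mul_sum]

private lemma mu_fourier (A B C : Finset (Fin n → ZMod 2)) :
    (mu A B C : ℝ) = ((2:ℝ)^n)^2 * ∑ S : Finset (Fin n),
      fhat n (ind A) S * fhat n (ind B) S * fhat n (ind C) S := by
  have hQ : ((2:ℝ)^n) ≠ 0 := by positivity
  have hS : ∀ S : Finset (Fin n),
      fhat n (ind A) S * fhat n (ind B) S * fhat n (ind C) S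
        = (∑ x : Fin n → ZMod 2, ∑ y : Fin n → ZMod 2, ∑ z : Fin n → ZMod 2,
            ind A x * ind B y * ind C z * (chi n S x * chi n S y * chi n S z)) / ((2:ℝ)^n)^3 := by
    intro S
    rw [fhat, fhat, fhat, div_mul_div_comm, div_mul_div_comm]
    have h3 : (2^n:ℝ) * 2^n * 2^n = ((2:ℝ)^n)^3 := by ring
    rw [h3]
    congr 1
    rw [sum3_mul]
    refine Finset.sum_congr rfl fun x _ => Finset.sum_congr rfl fun y _ =>
      Finset.sum_congr rfl fun z _ => by ring
  rw [mu_eq, Finset.sum_congr rfl fun S _ => hS S, ← Finset.sum_div]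
  have swap : ∑ S : Finset (Fin n), ∑ x : Fin n → ZMod 2, ∑ y : Fin n → ZMod 2,
        ∑ z : Fin n → ZMod 2,
        ind A x * ind B y * ind C z * (chi n S x * chi n S y * chi n S z)
      = ∑ x : Fin n → ZMod 2, ∑ y : Fin n → ZMod 2, ∑ z : Fin n → ZMod 2,
        ∑ S : Finset (Fin n),
        ind A x * ind B y * ind C z * (chi n S x * chi n S y * chi n S z) := by
    rw [Finset.sum_comm]
    refine Finset.sum_congr rfl fun x _ => ?_
    rw [Finset.sum_comm]
    refine Finset.sum_congr rfl fun y _ => ?_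
    rw [Finset.sum_comm]
  rw [swap]
  have collapse : ∀ x y z : Fin n → ZMod 2,
      ∑ S : Finset (Fin n), ind A x * ind B y * ind C z * (chi n S x * chi n S y * chi n S z)
        = ind A x * ind B y * ind C z * (if x + y + z = 0 then (2:ℝ)^n else 0) := by
    intro x y z
    rw [← Finset.mul_sum, sum_chi_mul3]
  simp only [collapse]
  have hfrac : ∀ X : ℝ, ((2:ℝ)^n)^2 * (X / ((2:ℝ)^n)^3) = X / (2:ℝ)^n := by
    intro X; field_simp
  rw [hfrac]
  simp only [Finset.sum_div]
  refine Finset.sum_congr rfl fun x _ => Finset.sum_congr rfl fun y _ =>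
    Finset.sum_congr rfl fun z _ => ?_
  split_ifs with h
  · field_simp
  · simp

private lemma parseval (B : Finset (Fin n → ZMod 2)) :
    ∑ S : Finset (Fin n), (fhat n (ind B) S)^2 = (B.card : ℝ) / (2:ℝ)^n := by
  have hQ : ((2:ℝ)^n) ≠ 0 := by positivity
  have hS : ∀ S : Finset (Fin n), (fhat n (ind B) S)^2
      = (∑ x : Fin n → ZMod 2, ∑ y : Fin n → ZMod 2,
          ind B x * ind B y * (chi n S x * chi n S y)) / ((2:ℝ)^n)^2 := by
    intro S
    rw [fhat, div_pow]
    congr 1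
    rw [sq, Finset.sum_mul_sum]
    refine Finset.sum_congr rfl fun x _ => Finset.sum_congr rfl fun y _ => by ring
  rw [Finset.sum_congr rfl fun S _ => hS S, ← Finset.sum_div]
  rw [Finset.sum_comm]
  have swap2 : ∀ x : Fin n → ZMod 2,
      ∑ S : Finset (Fin n), ∑ y : Fin n → ZMod 2,
        ind B x * ind B y * (chi n S x * chi n S y)
      = ∑ y : Fin n → ZMod 2, ind B x * ind B y * (if x + y = 0 then (2:ℝ)^n else 0) := by
    intro x
    rw [Finset.sum_comm]
    refine Finset.sum_congr rfl fun y _ => ?_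
    rw [← Finset.mul_sum, sum_chi_mul2]
  simp only [swap2, add_eq_zero_iff'', mul_ite, mul_zero]
  rw [Finset.sum_congr rfl fun x _ => Finset.sum_ite_eq' Finset.univ x
    (fun y => ind B x * ind B y * (2:ℝ)^n)]
  simp only [Finset.mem_univ, if_true]
  have : ∀ x : Fin n → ZMod 2, ind B x * ind B x * (2:ℝ)^n = ind B x * (2:ℝ)^n := by
    intro x; rw [ind]; split_ifs <;> ring
  simp only [this]
  rw [← Finset.sum_mul]
  have hcard : ∑ x : Fin n → ZMod 2, ind B x = (B.card : ℝ) := by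
    simp [ind, Finset.sum_ite_mem]
  rw [hcard]
  field_simp

private lemma fhat_empty (A : Finset (Fin n → ZMod 2)) :
    fhat n (ind A) ∅ = (A.card : ℝ) / (2:ℝ)^n := by
  rw [fhat]
  congr 1
  have : ∀ x : Fin n → ZMod 2, chi n ∅ x = 1 := by intro x; simp [chi]
  simp only [this, mul_one]
  simp [ind, Finset.sum_ite_mem]

end Aux

theorem stmt3 (n : ℕ) (hn : 1 ≤ n) (A : Finset (Fin n → ZMod 2))
    (hA : ∀ S : Finset (Fin n), S ≠ ∅ →
      |fhat n (ind A) S| ≤ (4 / (2 ^ n : ℝ)) * Real.sqrt (Real.log (2 ^ n) * A.card)) :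
    ∀ B C : Finset (Fin n → ZMod 2), B.card = A.card → C.card = A.card →
      (mu A B C : ℝ) ≤ (A.card : ℝ) ^ 3 / (2 ^ n : ℝ) +
        4 * (A.card : ℝ) ^ ((3 : ℝ) / 2) * Real.sqrt (Real.log (2 ^ n)) := by
  intro B C hB hC
  have hQpos : (0:ℝ) < 2^n := by positivity
  have hQ : ((2:ℝ)^n) ≠ 0 := ne_of_gt hQpos
  have hlog : 0 ≤ Real.log ((2:ℝ)^n) :=
    Real.log_nonneg (one_le_pow₀ (by norm_num))
  -- Cauchy–Schwarz bound
  have hCS : ∑ S : Finset (Fin n), |fhat n (ind B) S| * |fhat n (ind C) S|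
      ≤ (A.card : ℝ) / (2:ℝ)^n := by
    have h := Finset.sum_mul_sq_le_sq_mul_sq Finset.univ
      (fun S => |fhat n (ind B) S|) (fun S => |fhat n (ind C) S|)
    simp only [sq_abs] at h
    rw [parseval, parseval, hB, hC] at h
    have hnn : 0 ≤ ∑ S : Finset (Fin n), |fhat n (ind B) S| * |fhat n (ind C) S| :=
      Finset.sum_nonneg fun S _ => mul_nonneg (abs_nonneg _) (abs_nonneg _)
    have hc : (0:ℝ) ≤ (A.card : ℝ) / (2:ℝ)^n := by positivity
    nlinarith [h, hnn, hc]
  have hMnn : (0:ℝ) ≤ (4 / (2 ^ n : ℝ)) * Real.sqrt (Real.log (2 ^ n) * A.card) := by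
    positivity
  have h2 : ∑ S ∈ Finset.univ.erase (∅ : Finset (Fin n)),
      fhat n (ind A) S * fhat n (ind B) S * fhat n (ind C) S
      ≤ (4 / (2 ^ n : ℝ)) * Real.sqrt (Real.log (2 ^ n) * A.card) * ((A.card : ℝ) / (2:ℝ)^n) := by
    calc ∑ S ∈ Finset.univ.erase (∅ : Finset (Fin n)),
        fhat n (ind A) S * fhat n (ind B) S * fhat n (ind C) S
        ≤ ∑ S ∈ Finset.univ.erase (∅ : Finset (Fin n)),
          |fhat n (ind A) S| * (|fhat n (ind B) S| * |fhat n (ind C) S|) := by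
          refine Finset.sum_le_sum fun S _ => ?_
          calc fhat n (ind A) S * fhat n (ind B) S * fhat n (ind C) S
              ≤ |fhat n (ind A) S * fhat n (ind B) S * fhat n (ind C) S| := le_abs_self _
            _ = |fhat n (ind A) S| * (|fhat n (ind B) S| * |fhat n (ind C) S|) := by
                rw [abs_mul, abs_mul, mul_assoc]
      _ ≤ ∑ S ∈ Finset.univ.erase (∅ : Finset (Fin n)),
          (4 / (2 ^ n : ℝ)) * Real.sqrt (Real.log (2 ^ n) * A.card)
            * (|fhat n (ind B) S| * |fhat n (ind C) S|) := by
          refine Finset.sum_le_sum fun S hS => ?_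
          refine mul_le_mul_of_nonneg_right (hA S ?_) (by positivity)
          exact (Finset.mem_erase.mp hS).1
      _ ≤ ∑ S : Finset (Fin n),
          (4 / (2 ^ n : ℝ)) * Real.sqrt (Real.log (2 ^ n) * A.card)
            * (|fhat n (ind B) S| * |fhat n (ind C) S|) := by
          refine Finset.sum_le_sum_of_subset_of_nonneg (Finset.erase_subset _ _)
            fun S _ _ => by positivity
      _ = (4 / (2 ^ n : ℝ)) * Real.sqrt (Real.log (2 ^ n) * A.card)
            * ∑ S : Finset (Fin n), |fhat n (ind B) S| * |fhat n (ind C) S| := by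
          rw [Finset.mul_sum]
      _ ≤ _ := mul_le_mul_of_nonneg_left hCS hMnn
  have hpow : (A.card:ℝ) ^ ((3:ℝ)/2) = (A.card:ℝ) * Real.sqrt (A.card) := by
    rcases Nat.eq_zero_or_pos A.card with h | h
    · rw [h]; simp [Real.zero_rpow (by norm_num : ((3:ℝ)/2) ≠ 0)]
    · have hpos : (0:ℝ) < (A.card : ℝ) := by exact_mod_cast h
      rw [show ((3:ℝ)/2) = 1 + 1/2 by norm_num, Real.rpow_add hpos, Real.rpow_one,
        Real.sqrt_eq_rpow]
  rw [mu_fourier, ← Finset.add_sum_erase _ _ (Finset.mem_univ (∅ : Finset (Fin n))), mul_add]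
  have h1 : ((2:ℝ)^n)^2 * (fhat n (ind A) ∅ * fhat n (ind B) ∅ * fhat n (ind C) ∅)
      = (A.card:ℝ)^3 / (2:ℝ)^n := by
    rw [fhat_empty, fhat_empty, fhat_empty, hB, hC]
    field_simp
  rw [h1]
  refine add_le_add_right ?_ _
  calc ((2:ℝ)^n)^2 * ∑ S ∈ Finset.univ.erase (∅ : Finset (Fin n)),
        fhat n (ind A) S * fhat n (ind B) S * fhat n (ind C) S
      ≤ ((2:ℝ)^n)^2 * ((4 / (2 ^ n : ℝ)) * Real.sqrt (Real.log (2 ^ n) * A.card)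
          * ((A.card : ℝ) / (2:ℝ)^n)) :=
        mul_le_mul_of_nonneg_left h2 (by positivity)
    _ = 4 * (A.card : ℝ) ^ ((3 : ℝ) / 2) * Real.sqrt (Real.log (2 ^ n)) := by
        rw [Real.sqrt_mul hlog, hpow]
        field_simp
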